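/- The 7-dimensional real nilpotent Lie algebra g = (0,0,0,0,12,13,0) admits a calibrated G2-structure. Explicitly, the 3-form φ = e^{147}+e^{267}+e^{357}+e^{123}+e^{156}+e^{245}−e^{346} is a G2 form on g and satisfies dφ = 0. -/

import Mathlib

open scoped TensorProduct

noncomputable section
set_option synthInstance.maxHeartbeats 1000000
set_option maxHeartbeats 4000000

namespace G2Paper

variable {V : Type*} [AddCommGroup V] [Module ℝ V]

/-- The wedge product of two real-valued alternating forms. -/
def wedge {k l : ℕ} (α : V [⋀^Fin k]→ₗ[ℝ] ℝ) (β : V [⋀^Fin l]→ₗ[ℝ] ℝ) :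
    V [⋀^Fin (k + l)]→ₗ[ℝ] ℝ :=
  ((TensorProduct.lid ℝ ℝ).toLinearMap.compAlternatingMap
    (α.domCoprod β)).domDomCongr finSumFinEquiv

/-- A linear functional regarded as an alternating 1-form. -/
def oneForm (f : V →ₗ[ℝ] ℝ) : V [⋀^Fin 1]→ₗ[ℝ] ℝ :=
  AlternatingMap.ofSubsingleton ℝ V ℝ (0 : Fin 1) f

/-- The wedge of three linear functionals, as a 3-form. -/
def wedge3 (a b c : V →ₗ[ℝ] ℝ) : V [⋀^Fin 3]→ₗ[ℝ] ℝ :=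
  wedge (wedge (oneForm a) (oneForm b)) (oneForm c)

/-- `e^i ∧ e^j` for a basis `e`. -/
def basis2Form {n : ℕ} (e : Module.Basis (Fin n) ℝ V) (i j : Fin n) : V [⋀^Fin 2]→ₗ[ℝ] ℝ :=
  wedge (oneForm (e.coord i)) (oneForm (e.coord j))

/-- `e^i ∧ e^j ∧ e^k` for a basis `e`. -/
def basis3Form {n : ℕ} (e : Module.Basis (Fin n) ℝ V) (i j k : Fin n) : V [⋀^Fin 3]→ₗ[ℝ] ℝ :=
  wedge3 (e.coord i) (e.coord j) (e.coord k)

/-- The standard G₂ form `e¹²⁷+e³⁴⁷+e⁵⁶⁷+e¹³⁵−e²³⁶−e¹⁴⁶−e²⁴⁵` associated to a basis of a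
7-dimensional space (here indices are 0-based, so e.g. `e¹²⁷` is `basis3Form B 0 1 6`). -/
def stdG2 (B : Module.Basis (Fin 7) ℝ V) : V [⋀^Fin 3]→ₗ[ℝ] ℝ :=
  basis3Form B 0 1 6 + basis3Form B 2 3 6 + basis3Form B 4 5 6 + basis3Form B 0 2 4
    - basis3Form B 1 2 5 - basis3Form B 0 3 5 - basis3Form B 1 3 4

/-- A G₂ form on a 7-dimensional real vector space: a 3-form which, in some basis, is the
standard G₂ form. -/
def IsG2 (φ : V [⋀^Fin 3]→ₗ[ℝ] ℝ) : Prop :=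
  ∃ B : Module.Basis (Fin 7) ℝ V, φ = stdG2 B

variable {L : Type*} [LieRing L] [LieAlgebra ℝ L]

/-- The Chevalley–Eilenberg differential (with trivial coefficients) of a `(k+1)`-form, as a
function on `(k+2)`-tuples:
`(dα)(x₀,…,x_{k+1}) = Σ_{i<j} (−1)^{i+j} α(⁅xᵢ,xⱼ⁆, x₀,…,x̂ᵢ,…,x̂ⱼ,…,x_{k+1})`.
A `(k+1)`-form `α` is closed iff `ceDiff α = 0`, and exact iff `⇑α = ceDiff β` for some
`k`-form `β`. -/
def ceDiff {k : ℕ} (α : L [⋀^Fin (k + 1)]→ₗ[ℝ] ℝ) : (Fin (k + 2) → L) → ℝ :=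
  fun x => ∑ i : Fin (k + 2), ∑ j : Fin (k + 2),
    if h : (i : ℕ) < (j : ℕ) then
      (-1 : ℝ) ^ ((i : ℕ) + (j : ℕ)) *
        α (Fin.cons ⁅x i, x j⁆ fun m : Fin k =>
          x (j.succAbove ((Fin.castLT i
            (lt_of_lt_of_le h (Nat.lt_succ_iff.mp j.isLt))).succAbove m)))
    else 0

/-- The statement that a basis `e` of a Lie algebra has dual basis `e^1,…,e^n` satisfying the
structure equations `de^i = D i` for the Chevalley–Eilenberg differential. -/
def hasDualDiff {n : ℕ} (e : Module.Basis (Fin n) ℝ L) (D : Fin n → L [⋀^Fin 2]→ₗ[ℝ] ℝ) : Prop :=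
  ∀ i : Fin n, ceDiff (oneForm (e.coord i)) = ⇑(D i)

/-- A symplectic form on a (6-dimensional) Lie algebra: a closed 2-form `ω` with
`ω ∧ ω ∧ ω ≠ 0`. -/
def IsSymplectic (ω : L [⋀^Fin 2]→ₗ[ℝ] ℝ) : Prop :=
  ceDiff ω = 0 ∧ wedge (wedge ω ω) ω ≠ 0


section AuxEval
open Equiv Sum

lemma oneForm_apply (f : V →ₗ[ℝ] ℝ) (x : Fin 1 → V) : oneForm f x = f (x 0) := rfl

lemma classify11 : ∀ q : Perm.ModSumCongr (Fin 1) (Fin 1),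
    q = Quotient.mk'' 1 ∨ q = Quotient.mk'' (Equiv.swap (inl 0) (inr 0)) := by
  intro q
  induction q using Quotient.inductionOn' with
  | h σ =>
    have h := (by decide : ∀ σ : Perm (Fin 1 ⊕ Fin 1),
      σ ∈ (Perm.sumCongrHom (Fin 1) (Fin 1)).range ∨
      ((Equiv.swap (inl 0) (inr 0))⁻¹ * σ) ∈ (Perm.sumCongrHom (Fin 1) (Fin 1)).range) σ
    rcases h with h | h
    · left; exact (QuotientGroup.eq.mpr (by simpa using h)).symm
    · right; exact (QuotientGroup.eq.mpr h).symm

lemma sum11 {M : Type*} [AddCommMonoid M] (f : Perm.ModSumCongr (Fin 1) (Fin 1) → M) :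
    ∑ q, f q = f (Quotient.mk'' 1) + f (Quotient.mk'' (Equiv.swap (inl 0) (inr 0))) := by
  have hne : (Quotient.mk'' 1 : Perm.ModSumCongr (Fin 1) (Fin 1))
      ≠ Quotient.mk'' (Equiv.swap (inl 0) (inr 0)) := by
    intro h
    have := QuotientGroup.eq.mp h
    revert this; decide
  let e : Bool → Perm.ModSumCongr (Fin 1) (Fin 1) := fun b =>
    Bool.rec (Quotient.mk'' 1) (Quotient.mk'' (Equiv.swap (inl 0) (inr 0))) b
  have hbij : Function.Bijective e := by
    constructor
    · intro a b hab
      cases a <;> cases b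
      · rfl
      · exact (hne hab).elim
      · exact (hne hab.symm).elim
      · rfl
    · intro q
      rcases classify11 q with h | h
      · exact ⟨false, h.symm⟩
      · exact ⟨true, h.symm⟩
  rw [← hbij.sum_comp f, Fintype.sum_bool]
  exact add_comm _ _

lemma wedge11 (a b : V →ₗ[ℝ] ℝ) (v : Fin 2 → V) :
    wedge (oneForm a) (oneForm b) v = a (v 0) * b (v 1) - a (v 1) * b (v 0) := by
  show ((TensorProduct.lid ℝ ℝ).toLinearMap.compAlternatingMap
    ((oneForm a).domCoprod (oneForm b))).domDomCongr finSumFinEquiv v = _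
  rw [AlternatingMap.domDomCongr_apply, LinearMap.compAlternatingMap_apply]
  have : ((oneForm a).domCoprod (oneForm b)) (v ∘ finSumFinEquiv) =
      ∑ σ : Perm.ModSumCongr (Fin 1) (Fin 1),
        AlternatingMap.domCoprod.summand (oneForm a) (oneForm b) σ (v ∘ finSumFinEquiv) := by
    simp [AlternatingMap.domCoprod]
  rw [this, sum11, AlternatingMap.domCoprod.summand_mk'', AlternatingMap.domCoprod.summand_mk'']
  simp only [AlternatingMap.domCoprod.summand_mk'', MultilinearMap.smul_apply,
    MultilinearMap.domDomCongr_apply, MultilinearMap.domCoprod_apply]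
  rw [Equiv.Perm.sign_one, Equiv.Perm.sign_swap (by decide)]
  simp only [one_smul, Units.neg_smul, map_add, map_neg, TensorProduct.lid_tmul,
    Equiv.Perm.one_apply, Equiv.swap_apply_left, Equiv.swap_apply_right, Function.comp_apply,
    oneForm, AlternatingMap.ofSubsingleton, MultilinearMap.ofSubsingleton, smul_eq_mul,
    show (Fin.castAdd 1 (0:Fin 1) : Fin 2) = 0 from rfl]
  norm_num [finSumFinEquiv]
  have h0 : (Fin.castAdd 1 (0 : Fin 1) : Fin 2) = 0 := rfl
  rw [h0]; ring

lemma classify21 : ∀ q : Perm.ModSumCongr (Fin 2) (Fin 1),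
    q = Quotient.mk'' 1 ∨ q = Quotient.mk'' (Equiv.swap (inl 0) (inr 0)) ∨
      q = Quotient.mk'' (Equiv.swap (inl 1) (inr 0)) := by
  intro q
  induction q using Quotient.inductionOn' with
  | h σ =>
    have h := (by decide : ∀ σ : Perm (Fin 2 ⊕ Fin 1),
      σ ∈ (Perm.sumCongrHom (Fin 2) (Fin 1)).range ∨
      ((Equiv.swap (inl 0) (inr 0))⁻¹ * σ) ∈ (Perm.sumCongrHom (Fin 2) (Fin 1)).range ∨
      ((Equiv.swap (inl 1) (inr 0))⁻¹ * σ) ∈ (Perm.sumCongrHom (Fin 2) (Fin 1)).range) σ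
    rcases h with h | h | h
    · exact Or.inl (QuotientGroup.eq.mpr (by simpa using h)).symm
    · exact Or.inr (Or.inl (QuotientGroup.eq.mpr h).symm)
    · exact Or.inr (Or.inr (QuotientGroup.eq.mpr h).symm)

lemma sum21 {M : Type*} [AddCommMonoid M] (f : Perm.ModSumCongr (Fin 2) (Fin 1) → M) :
    ∑ q, f q = f (Quotient.mk'' 1) + f (Quotient.mk'' (Equiv.swap (inl 0) (inr 0)))
      + f (Quotient.mk'' (Equiv.swap (inl 1) (inr 0))) := by
  have h01 : (Quotient.mk'' 1 : Perm.ModSumCongr (Fin 2) (Fin 1))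
      ≠ Quotient.mk'' (Equiv.swap (inl 0) (inr 0)) := fun h => by
    have := QuotientGroup.eq.mp h; revert this; decide
  have h02 : (Quotient.mk'' 1 : Perm.ModSumCongr (Fin 2) (Fin 1))
      ≠ Quotient.mk'' (Equiv.swap (inl 1) (inr 0)) := fun h => by
    have := QuotientGroup.eq.mp h; revert this; decide
  have h12 : (Quotient.mk'' (Equiv.swap (inl 0) (inr 0)) : Perm.ModSumCongr (Fin 2) (Fin 1))
      ≠ Quotient.mk'' (Equiv.swap (inl 1) (inr 0)) := fun h => by
    have := QuotientGroup.eq.mp h; revert this; decide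
  let e : Fin 3 → Perm.ModSumCongr (Fin 2) (Fin 1) :=
    ![Quotient.mk'' 1, Quotient.mk'' (Equiv.swap (inl 0) (inr 0)),
      Quotient.mk'' (Equiv.swap (inl 1) (inr 0))]
  have hbij : Function.Bijective e := by
    constructor
    · intro a b hab
      fin_cases a <;> fin_cases b <;>
        first
        | rfl
        | exact (h01 hab).elim | exact (h01 hab.symm).elim
        | exact (h02 hab).elim | exact (h02 hab.symm).elim
        | exact (h12 hab).elim | exact (h12 hab.symm).elim
    · intro q
      rcases classify21 q with h | h | h
      · exact ⟨0, h.symm⟩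
      · exact ⟨1, h.symm⟩
      · exact ⟨2, h.symm⟩
  rw [← hbij.sum_comp f, Fin.sum_univ_three]
  rfl

lemma wedge21 (ω : V [⋀^Fin 2]→ₗ[ℝ] ℝ) (c : V →ₗ[ℝ] ℝ) (v : Fin 3 → V) :
    wedge ω (oneForm c) v = ω ![v 0, v 1] * c (v 2) - ω ![v 2, v 1] * c (v 0)
      - ω ![v 0, v 2] * c (v 1) := by
  show ((TensorProduct.lid ℝ ℝ).toLinearMap.compAlternatingMap
    (ω.domCoprod (oneForm c))).domDomCongr finSumFinEquiv v = _
  rw [AlternatingMap.domDomCongr_apply, LinearMap.compAlternatingMap_apply]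
  have : (ω.domCoprod (oneForm c)) (v ∘ finSumFinEquiv) =
      ∑ σ : Perm.ModSumCongr (Fin 2) (Fin 1),
        AlternatingMap.domCoprod.summand ω (oneForm c) σ (v ∘ finSumFinEquiv) := by
    simp [AlternatingMap.domCoprod]
  rw [this, sum21]
  simp only [AlternatingMap.domCoprod.summand_mk'', MultilinearMap.smul_apply,
    MultilinearMap.domDomCongr_apply, MultilinearMap.domCoprod_apply]
  rw [Equiv.Perm.sign_one, Equiv.Perm.sign_swap (by decide), Equiv.Perm.sign_swap (by decide)]
  simp only [one_smul, Units.neg_smul, map_add, map_neg, TensorProduct.lid_tmul,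
    Equiv.Perm.one_apply, Equiv.swap_apply_left, Equiv.swap_apply_right, Function.comp_apply,
    smul_eq_mul, oneForm_apply]
  have h1 : (fun i : Fin 2 => v ((finSumFinEquiv : Fin 2 ⊕ Fin 1 ≃ Fin 3) (Sum.inl i)))
      = ![v 0, v 1] := by funext i; fin_cases i <;> rfl
  have h2 : (fun i : Fin 2 => v ((finSumFinEquiv : Fin 2 ⊕ Fin 1 ≃ Fin 3)
      ((Equiv.swap (inl 0) (inr 0)) (Sum.inl i)))) = ![v 2, v 1] := by
    funext i; fin_cases i <;> simp [Equiv.swap_apply_def] <;> rfl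
  have h3 : (fun i : Fin 2 => v ((finSumFinEquiv : Fin 2 ⊕ Fin 1 ≃ Fin 3)
      ((Equiv.swap (inl 1) (inr 0)) (Sum.inl i)))) = ![v 0, v 2] := by
    funext i; fin_cases i <;> simp [Equiv.swap_apply_def] <;> rfl
  rw [h1, h2, h3]
  have c1 : (((oneForm c) : MultilinearMap ℝ (fun _ : Fin 1 => V) ℝ)
      fun i : Fin 1 => v (finSumFinEquiv (inr i))) = c (v 2) := rfl
  have c2 : (((oneForm c) : MultilinearMap ℝ (fun _ : Fin 1 => V) ℝ) fun i : Fin 1 =>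
      v (finSumFinEquiv ((Equiv.swap (inl 0) (inr 0)) (inr i)))) = c (v 0) := rfl
  have c3 : (((oneForm c) : MultilinearMap ℝ (fun _ : Fin 1 => V) ℝ) fun i : Fin 1 =>
      v (finSumFinEquiv ((Equiv.swap (inl 1) (inr 0)) (inr i)))) = c (v 1) := rfl
  rw [c1, c2, c3]
  simp only [LinearEquiv.coe_coe, TensorProduct.lid_tmul, smul_eq_mul,
    AlternatingMap.coe_multilinearMap]
  ring



lemma wedge3_apply (a b c : V →ₗ[ℝ] ℝ) (v : Fin 3 → V) :
    wedge3 a b c v =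
      (a (v 0) * b (v 1) - a (v 1) * b (v 0)) * c (v 2)
      - (a (v 2) * b (v 1) - a (v 1) * b (v 2)) * c (v 0)
      - (a (v 0) * b (v 2) - a (v 2) * b (v 0)) * c (v 1) := by
  show wedge (wedge (oneForm a) (oneForm b)) (oneForm c) v = _
  rw [wedge21, wedge11, wedge11, wedge11]
  simp [Matrix.cons_val_zero, Matrix.cons_val_one, Matrix.head_cons]

lemma basis3Form_apply {n : ℕ} (e : Module.Basis (Fin n) ℝ V) (i j k : Fin n) (v : Fin 3 → V) :
    basis3Form e i j k v =
      (e.coord i (v 0) * e.coord j (v 1) - e.coord i (v 1) * e.coord j (v 0)) * e.coord k (v 2)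
      - (e.coord i (v 2) * e.coord j (v 1) - e.coord i (v 1) * e.coord j (v 2)) * e.coord k (v 0)
      - (e.coord i (v 0) * e.coord j (v 2) - e.coord i (v 2) * e.coord j (v 0)) * e.coord k (v 1) :=
  wedge3_apply _ _ _ v

end AuxEval

section AuxCE
variable {L : Type*} [LieRing L] [LieAlgebra ℝ L]

lemma ceDiff_one (α : L [⋀^Fin 1]→ₗ[ℝ] ℝ) (x : Fin 2 → L) :
    ceDiff α x = -α (fun _ => ⁅x 0, x 1⁆) := by
  simp [ceDiff, Fin.sum_univ_two]
  congr 1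
  funext m
  rw [Fin.fin_one_eq_zero m]
  rfl

lemma ceDiff_three (α : L [⋀^Fin 3]→ₗ[ℝ] ℝ) (x : Fin 4 → L) :
    ceDiff α x = -α ![⁅x 0, x 1⁆, x 2, x 3] + α ![⁅x 0, x 2⁆, x 1, x 3]
      - α ![⁅x 0, x 3⁆, x 1, x 2] - α ![⁅x 1, x 2⁆, x 0, x 3]
      + α ![⁅x 1, x 3⁆, x 0, x 2] - α ![⁅x 2, x 3⁆, x 0, x 1] := by
  simp [ceDiff, Fin.sum_univ_four]
  have h01 : α (Fin.cons ⁅x 0, x 1⁆ fun m : Fin 2 =>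
      x m.succ.succ)
      = α ![⁅x 0, x 1⁆, x 2, x 3] := by congr 1; funext m; fin_cases m <;> rfl
  have h02 : α (Fin.cons ⁅x 0, x 2⁆ fun m : Fin 2 =>
      x (Fin.succAbove 2 m.succ))
      = α ![⁅x 0, x 2⁆, x 1, x 3] := by congr 1; funext m; fin_cases m <;> rfl
  have h03 : α (Fin.cons ⁅x 0, x 3⁆ fun m : Fin 2 =>
      x (Fin.succAbove 3 m.succ))
      = α ![⁅x 0, x 3⁆, x 1, x 2] := by congr 1; funext m; fin_cases m <;> rfl
  have h12 : α (Fin.cons ⁅x 1, x 2⁆ fun m : Fin 2 =>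
      x (Fin.succAbove 2 (Fin.succAbove 1 m)))
      = α ![⁅x 1, x 2⁆, x 0, x 3] := by congr 1; funext m; fin_cases m <;> rfl
  have h13 : α (Fin.cons ⁅x 1, x 3⁆ fun m : Fin 2 =>
      x (Fin.succAbove 3 (Fin.succAbove 1 m)))
      = α ![⁅x 1, x 3⁆, x 0, x 2] := by congr 1; funext m; fin_cases m <;> rfl
  have h23 : α (Fin.cons ⁅x 2, x 3⁆ fun m : Fin 2 =>
      x (Fin.succAbove 3 ((Fin.castPred (2 : Fin 4) (by decide)).succAbove m)))
      = α ![⁅x 2, x 3⁆, x 0, x 1] := by congr 1; funext m; fin_cases m <;> rfl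
  rw [h01, h02, h03, h12, h13, h23]
  norm_num [show ((3 : Fin 4) : ℕ) = 3 from rfl, pow_succ]
  ring

end AuxCE

def permπ : Equiv.Perm (Fin 7) :=
  ⟨![0, 3, 1, 5, 2, 4, 6], ![0, 2, 4, 1, 5, 3, 6], by decide, by decide⟩

/-- The nilpotent Lie algebra `(0,0,0,0,12,13,0)` admits a calibrated
G₂-structure; explicitly, `φ = e¹⁴⁷+e²⁶⁷+e³⁵⁷+e¹²³+e¹⁵⁶+e²⁴⁵−e³⁴⁶` is a closed G₂ form. -/
theorem calibrated_G2_on_0_0_0_0_12_13_0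
    {g : Type*} [LieRing g] [LieAlgebra ℝ g] (e : Module.Basis (Fin 7) ℝ g)
    (he : hasDualDiff e
      ![0, 0, 0, 0, basis2Form e 0 1, basis2Form e 0 2, 0]) :
    (∃ φ : g [⋀^Fin 3]→ₗ[ℝ] ℝ, IsG2 φ ∧ ceDiff φ = 0) ∧
      IsG2 (basis3Form e 0 3 6 + basis3Form e 1 5 6 + basis3Form e 2 4 6
        + basis3Form e 0 1 2 + basis3Form e 0 4 5 + basis3Form e 1 3 4
        - basis3Form e 2 3 5) ∧
      ceDiff (basis3Form e 0 3 6 + basis3Form e 1 5 6 + basis3Form e 2 4 6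
        + basis3Form e 0 1 2 + basis3Form e 0 4 5 + basis3Form e 1 3 4
        - basis3Form e 2 3 5) = 0 := by
  have hbr : ∀ i : Fin 7, ∀ u w : g, e.coord i ⁅u, w⁆
      = -((![0, 0, 0, 0, basis2Form e 0 1, basis2Form e 0 2, 0] :
          Fin 7 → g [⋀^Fin 2]→ₗ[ℝ] ℝ) i) ![u, w] := by
    intro i u w
    have h := congrFun (he i) ![u, w]
    rw [ceDiff_one] at h
    rw [← h]
    simp [oneForm_apply]
  have hb0 : ∀ u w : g, e.coord 0 ⁅u, w⁆ = 0 := fun u w => by simpa using hbr 0 u w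
  have hb1 : ∀ u w : g, e.coord 1 ⁅u, w⁆ = 0 := fun u w => by simpa using hbr 1 u w
  have hb2 : ∀ u w : g, e.coord 2 ⁅u, w⁆ = 0 := fun u w => by simpa using hbr 2 u w
  have hb3 : ∀ u w : g, e.coord 3 ⁅u, w⁆ = 0 := fun u w => by simpa using hbr 3 u w
  have hb6 : ∀ u w : g, e.coord 6 ⁅u, w⁆ = 0 := fun u w => by
    simpa [show (![0, 0, 0, 0, basis2Form e 0 1, basis2Form e 0 2, 0] :
      Fin 7 → g [⋀^Fin 2]→ₗ[ℝ] ℝ) 6 = 0 from rfl] using hbr 6 u w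
  have hb4 : ∀ u w : g, e.coord 4 ⁅u, w⁆
      = -(e.coord 0 u * e.coord 1 w - e.coord 0 w * e.coord 1 u) := fun u w => by
    simpa [basis2Form, wedge11] using hbr 4 u w
  have hb5 : ∀ u w : g, e.coord 5 ⁅u, w⁆
      = -(e.coord 0 u * e.coord 2 w - e.coord 0 w * e.coord 2 u) := fun u w => by
    have h := hbr 5 u w
    rw [show (![0, 0, 0, 0, basis2Form e 0 1, basis2Form e 0 2, 0] :
      Fin 7 → g [⋀^Fin 2]→ₗ[ℝ] ℝ) 5 = basis2Form e 0 2 from rfl] at h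
    rw [h]
    show -(wedge (oneForm (e.coord 0)) (oneForm (e.coord 2)) ![u, w]) = _
    rw [wedge11]
    simp
  have hG2 : IsG2 (basis3Form e 0 3 6 + basis3Form e 1 5 6 + basis3Form e 2 4 6
      + basis3Form e 0 1 2 + basis3Form e 0 4 5 + basis3Form e 1 3 4
      - basis3Form e 2 3 5) := by
    refine ⟨e.reindex permπ.symm, ?_⟩
    have hco : ∀ i, (e.reindex permπ.symm).coord i = e.coord (permπ i) := fun i => by
      ext u
      simp [Module.Basis.coord, Module.Basis.repr_reindex_apply]
    have hbf : ∀ i j k, basis3Form (e.reindex permπ.symm) i j k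
        = basis3Form e (permπ i) (permπ j) (permπ k) := fun i j k => by
      simp [basis3Form, hco]
    rw [stdG2, hbf, hbf, hbf, hbf, hbf, hbf, hbf]
    rw [show permπ 0 = 0 from rfl, show permπ 1 = 3 from rfl, show permπ 2 = 1 from rfl,
      show permπ 3 = 5 from rfl, show permπ 4 = 2 from rfl, show permπ 5 = 4 from rfl,
      show permπ 6 = 6 from rfl]
    ext v
    simp only [AlternatingMap.add_apply, AlternatingMap.sub_apply, basis3Form_apply]
    ring
  have hclosed : ceDiff (basis3Form e 0 3 6 + basis3Form e 1 5 6 + basis3Form e 2 4 6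
      + basis3Form e 0 1 2 + basis3Form e 0 4 5 + basis3Form e 1 3 4
      - basis3Form e 2 3 5) = 0 := by
    funext x
    rw [ceDiff_three]
    simp only [AlternatingMap.add_apply, AlternatingMap.sub_apply, basis3Form_apply,
      Matrix.cons_val_zero, Matrix.cons_val_one, Matrix.head_cons,
      Matrix.cons_val_two, Matrix.tail_cons, Pi.zero_apply]
    simp only [hb0, hb1, hb2, hb3, hb4, hb5, hb6]
    ring
  exact ⟨⟨_, hG2, hclosed⟩, hG2, hclosed⟩
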